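/- Let Σ be a Horn theory, c a clause, and α a nonnegative integer. Then σ_α(Σ) ⊨ c if and only if for every subset S ⊆ P(c) with |S| ≥ |P(c)| − α and every model w of Σ with OFF(w) ∩ P(c) = S, it holds that |OFF(w) ∩ N(c)| ≥ α − |P(c)| + |S| + 1. -/

import Mathlib

/-- Hamming distance between two 0/1 vectors. -/
def Hdist {n : ℕ} (v w : Fin n → Bool) : ℕ :=
  (Finset.univ.filter (fun i => v i ≠ w i)).card

/-- α-sigmaInt of a model set. -/
def sigmaInt {n : ℕ} (α : ℕ) (M : Set (Fin n → Bool)) : Set (Fin n → Bool) :=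
  {v | ∀ w, Hdist v w ≤ α → w ∈ M}

/-- α-sigmaExt of a model set. -/
def sigmaExt {n : ℕ} (α : ℕ) (M : Set (Fin n → Bool)) : Set (Fin n → Bool) :=
  {v | ∃ w ∈ M, Hdist v w ≤ α}

/-- A clause with positive index set `P` and negative index set `N`. -/
structure Clause (n : ℕ) where
  P : Finset (Fin n)
  N : Finset (Fin n)
  disj : Disjoint P N

/-- Satisfaction of a clause by an assignment. -/
def Clause.sat {n : ℕ} (c : Clause n) (v : Fin n → Bool) : Prop :=
  (∃ i ∈ c.P, v i = true) ∨ (∃ i ∈ c.N, v i = false)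

/-- The set of coordinates where v is 0. -/
def OFFs {n : ℕ} (v : Fin n → Bool) : Finset (Fin n) :=
  Finset.univ.filter (fun i => v i = false)

theorem stmt16 {n : ℕ} (α : ℕ) (M : Set (Fin n → Bool))
    (hcl : ∀ u ∈ M, ∀ w ∈ M, (fun i => u i && w i) ∈ M) (c : Clause n) :
    (∀ v ∈ sigmaExt α M, c.sat v) ↔
    (∀ S ⊆ c.P, (c.P.card : ℤ) - α ≤ S.card →
      ∀ w ∈ M, OFFs w ∩ c.P = S →
        (α : ℤ) - c.P.card + S.card + 1 ≤ ((OFFs w ∩ c.N).card : ℤ)) := by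
  constructor
  · intro h S hS hcard w hw hOFF
    by_contra hlt
    push_neg at hlt
    set v : Fin n → Bool := fun i => if i ∈ c.P then false else if i ∈ c.N then true else w i
      with hv
    have hsub : (Finset.univ.filter (fun i => v i ≠ w i)) ⊆ (c.P \ S) ∪ (OFFs w ∩ c.N) := by
      intro i hi
      simp only [Finset.mem_filter, Finset.mem_univ, true_and] at hi
      simp only [Finset.mem_union, Finset.mem_sdiff, Finset.mem_inter, OFFs, Finset.mem_filter,
        Finset.mem_univ, true_and]
      by_cases hP : i ∈ c.P
      · left
        refine ⟨hP, fun hiS => ?_⟩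
        have hwf : w i = false := by
          have : i ∈ OFFs w ∩ c.P := hOFF ▸ hiS
          simpa [OFFs] using (Finset.mem_inter.mp this).1
        have hvi : v i = false := by simp [hv, hP]
        exact hi (hvi.trans hwf.symm)
      · by_cases hN : i ∈ c.N
        · right
          refine ⟨?_, hN⟩
          have hvi : v i = true := by simp [hv, hP, hN]
          cases hwi : w i
          · rfl
          · exact absurd (hvi.trans hwi.symm) hi
        · exact absurd (by simp [hv, hP, hN]) hi
    have h1 : Hdist v w ≤ (c.P \ S).card + (OFFs w ∩ c.N).card :=
      le_trans (Finset.card_le_card hsub) (Finset.card_union_le _ _)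
    have h2 : (c.P \ S).card = c.P.card - S.card := Finset.card_sdiff_of_subset hS
    have h3 : S.card ≤ c.P.card := Finset.card_le_card hS
    have hdle : Hdist v w ≤ α := by omega
    rcases h v ⟨w, hw, hdle⟩ with ⟨i, hi, hvi⟩ | ⟨i, hi, hvi⟩
    · simp [hv, hi] at hvi
    · have hiP : i ∉ c.P := Finset.disjoint_right.mp c.disj hi
      simp [hv, hiP, hi] at hvi
  · rintro h v ⟨w, hw, hd⟩
    by_contra hns
    rw [Clause.sat] at hns
    push_neg at hns
    obtain ⟨hP, hN⟩ := hns
    set S := OFFs w ∩ c.P with hSdef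
    have hsub : (c.P \ S) ∪ (OFFs w ∩ c.N) ⊆ Finset.univ.filter (fun i => v i ≠ w i) := by
      intro i hi
      simp only [Finset.mem_filter, Finset.mem_univ, true_and]
      rcases Finset.mem_union.mp hi with hi | hi
      · obtain ⟨hiP, hiS⟩ := Finset.mem_sdiff.mp hi
        have hwi : w i = true := by
          cases hwi : w i
          · exact absurd (Finset.mem_inter.mpr ⟨by simp [OFFs, hwi], hiP⟩) hiS
          · rfl
        have hvi : v i = false := by
          cases hvi : v i
          · rfl
          · exact absurd hvi (hP i hiP)
        simp [hvi, hwi]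
      · obtain ⟨hiO, hiN⟩ := Finset.mem_inter.mp hi
        have hwi : w i = false := by simpa [OFFs] using hiO
        have hvi : v i = true := by
          cases hvi : v i
          · exact absurd hvi (hN i hiN)
          · rfl
        simp [hvi, hwi]
    have hdisj : Disjoint (c.P \ S) (OFFs w ∩ c.N) :=
      Finset.disjoint_of_subset_left (Finset.sdiff_subset)
        (Finset.disjoint_of_subset_right Finset.inter_subset_right c.disj)
    have h1 : (c.P \ S).card + (OFFs w ∩ c.N).card ≤ Hdist v w := by
      rw [← Finset.card_union_of_disjoint hdisj]
      exact Finset.card_le_card hsub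
    have hSsub : S ⊆ c.P := Finset.inter_subset_right
    have h2 : (c.P \ S).card = c.P.card - S.card := Finset.card_sdiff_of_subset hSsub
    have h3 : S.card ≤ c.P.card := Finset.card_le_card hSsub
    have := h S hSsub (by omega) w hw rfl
    omega
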